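/- Let m ≥ 2 and let G be a finite group whose central quotient G/Z(G) is isomorphic to the dihedral group D_{2m} of order 2m, and let n = |Z(G)|. Then the commuting graph Γ_G is a disjoint union of one complete graph on (m − 1)·n vertices and m complete graphs each on n vertices; that is, Γ_G has exactly m + 1 connected components, every connected component is a clique, exactly one component has (m − 1)·n vertices, and the remaining m components each have n vertices. -/

import Mathlib

/-- The commuting graph of a group `G`: vertices are the non-central elements,
two distinct vertices are adjacent iff they commute. -/
def commutingGraph (G : Type*) [Group G] : SimpleGraph {x : G // x ∉ Subgroup.center G} where
  Adj x y := x ≠ y ∧ (x : G) * y = (y : G) * x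
  symm := ⟨by rintro x y ⟨hne, hc⟩; exact ⟨hne.symm, hc.symm⟩⟩
  loopless := ⟨by rintro x ⟨hne, _⟩; exact hne rfl⟩

private def fvalAux {m : ℕ} : DihedralGroup m → Option (ZMod m)
  | .r _ => none
  | .sr b => some b

theorem commuting_graph_disjoint_cliques_of_central_quotient_dihedral
    (m : ℕ) (hm : 2 ≤ m) (G : Type*) [Group G] [Finite G] (n : ℕ)
    (hZ : Nonempty ((G ⧸ Subgroup.center G) ≃* DihedralGroup m))
    (hn : Nat.card (Subgroup.center G) = n) :
    Nat.card (commutingGraph G).ConnectedComponent = m + 1 ∧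
      (∀ x y : {x : G // x ∉ Subgroup.center G},
        (commutingGraph G).Reachable x y → x = y ∨ (commutingGraph G).Adj x y) ∧
      ∃ c₀ : (commutingGraph G).ConnectedComponent,
        Nat.card {x : {x : G // x ∉ Subgroup.center G} //
            (commutingGraph G).connectedComponentMk x = c₀} = (m - 1) * n ∧
        ∀ c : (commutingGraph G).ConnectedComponent, c ≠ c₀ →
          Nat.card {x : {x : G // x ∉ Subgroup.center G} //
              (commutingGraph G).connectedComponentMk x = c} = n := by
  classical
  obtain ⟨e⟩ := hZ
  haveI : NeZero m := ⟨by omega⟩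
  haveI : Fact (1 < m) := ⟨hm⟩
  set φ : G →* DihedralGroup m :=
    e.toMonoidHom.comp (QuotientGroup.mk' (Subgroup.center G)) with hφdef
  have hker : ∀ x : G, φ x = 1 ↔ x ∈ Subgroup.center G := by
    intro x
    rw [hφdef]
    simp [QuotientGroup.eq_one_iff]
  have hsurj : Function.Surjective φ :=
    e.surjective.comp (QuotientGroup.mk'_surjective _)
  obtain ⟨g, hg⟩ := hsurj (DihedralGroup.r 1)
  have hgpow : ∀ a : ZMod m, φ (g ^ a.val) = DihedralGroup.r a := by
    intro a
    rw [map_pow, hg, DihedralGroup.r_one_pow, ZMod.natCast_val, ZMod.cast_id]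
  have sr_inv : ∀ b : ZMod m, (DihedralGroup.sr b : DihedralGroup m)⁻¹ = .sr b := fun b =>
    inv_eq_of_mul_eq_one_right (DihedralGroup.sr_mul_self b)
  have rot_decomp : ∀ (x : G) (a : ZMod m), φ x = .r a →
      ∃ z ∈ Subgroup.center G, x = g ^ a.val * z := by
    intro x a hx
    refine ⟨(g ^ a.val)⁻¹ * x, ?_, by group⟩
    rw [← hker, map_mul, map_inv, hgpow, hx, inv_mul_cancel]
  have comm_rot : ∀ (x y : G) (a b : ZMod m), φ x = .r a → φ y = .r b → x * y = y * x := by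
    intro x y a b hx hy
    obtain ⟨z, hz, rfl⟩ := rot_decomp x a hx
    obtain ⟨w, hw, rfl⟩ := rot_decomp y b hy
    have cz : ∀ t, Commute t z := fun t => Subgroup.mem_center_iff.1 hz t
    have cw : ∀ t, Commute t w := fun t => Subgroup.mem_center_iff.1 hw t
    have h1 : Commute (g ^ a.val) (g ^ b.val * w) :=
      ((Commute.refl g).pow_pow a.val b.val).mul_right (cw _)
    have h2 : Commute z (g ^ b.val * w) := ((cz _).symm).mul_right (cw z)
    exact (h1.mul_left h2).eq
  have central_of : ∀ (x y : G) (b : ZMod m), φ y = .sr b → x * g = g * x → x * y = y * x →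
      x ∈ Subgroup.center G := by
    intro x y b hy hxg hxy
    rw [Subgroup.mem_center_iff]
    intro h
    cases hh : φ h with
    | r c =>
      obtain ⟨z, hz, rfl⟩ := rot_decomp h c hh
      have cz : Commute x z := Subgroup.mem_center_iff.1 hz x
      have cxg : Commute x g := hxg
      exact ((cxg.pow_right c.val).mul_right cz).eq.symm
    | sr c =>
      have hw : φ (h * y⁻¹) = .r (b - c) := by
        rw [map_mul, map_inv, hh, hy, sr_inv, DihedralGroup.sr_mul_sr]
      obtain ⟨z, hz, hzeq⟩ := rot_decomp (h * y⁻¹) (b - c) hw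
      have hh' : h = g ^ (b - c).val * z * y := by
        rw [← hzeq]; group
      have cz : Commute x z := Subgroup.mem_center_iff.1 hz x
      have cxg : Commute x g := hxg
      have cxy : Commute x y := hxy
      have : Commute x (g ^ (b - c).val * z * y) :=
        ((cxg.pow_right _).mul_right cz).mul_right cxy
      rw [hh']
      exact this.eq.symm
  have no_cross : ∀ (x y : G) (a b : ZMod m), x ∉ Subgroup.center G → φ x = .r a →
      φ y = .sr b → x * y ≠ y * x := by
    intro x y a b hxc hx hy hxy
    exact hxc (central_of x y b hy (comm_rot x g a 1 hx hg) hxy)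
  have no_refl : ∀ (x y : G) (a b : ZMod m), φ x = .sr a → φ y = .sr b → a ≠ b →
      x * y ≠ y * x := by
    intro x y a b hx hy hab hxy
    have hw : φ (x * y⁻¹) = .r (b - a) := by
      rw [map_mul, map_inv, hx, hy, sr_inv, DihedralGroup.sr_mul_sr]
    have hwnc : x * y⁻¹ ∉ Subgroup.center G := by
      rw [← hker, hw, DihedralGroup.one_def]
      intro hcon
      have : b - a = 0 := by injection hcon
      exact hab (by linear_combination -this)
    have cxy : Commute x y := hxy
    have hcomm : (x * y⁻¹) * x = x * (x * y⁻¹) :=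
      ((Commute.refl x).mul_left (cxy.symm.inv_left)).eq
    exact no_cross (x * y⁻¹) x (b - a) a hwnc hw hx hcomm
  set V := {x : G // x ∉ Subgroup.center G} with hVdef
  set f : V → Option (ZMod m) := fun x => fvalAux (φ x.1) with hfdef
  have hadj_f : ∀ x y : V, (commutingGraph G).Adj x y → f x = f y := by
    rintro x y ⟨hne, hc⟩
    show fvalAux (φ x.1) = fvalAux (φ y.1)
    cases hx : φ x.1 with
    | r a =>
      cases hy : φ y.1 with
      | r b => rfl
      | sr b => exact absurd hc (no_cross x.1 y.1 a b x.2 hx hy)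
    | sr a =>
      cases hy : φ y.1 with
      | r b => exact absurd hc.symm (no_cross y.1 x.1 b a y.2 hy hx)
      | sr b =>
        by_cases hab : a = b
        · rw [hab]
        · exact absurd hc (no_refl x.1 y.1 a b hx hy hab)
  have hf_adj : ∀ x y : V, f x = f y → x = y ∨ (commutingGraph G).Adj x y := by
    intro x y hf
    by_cases hxy : x = y
    · exact Or.inl hxy
    refine Or.inr ⟨hxy, ?_⟩
    have hf' : fvalAux (φ x.1) = fvalAux (φ y.1) := hf
    cases hx : φ x.1 with
    | r a =>
      cases hy : φ y.1 with
      | r b => exact comm_rot x.1 y.1 a b hx hy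
      | sr b => rw [hx, hy] at hf'; simp [fvalAux] at hf'
    | sr a =>
      cases hy : φ y.1 with
      | r b => rw [hx, hy] at hf'; simp [fvalAux] at hf'
      | sr b =>
        rw [hx, hy] at hf'
        have hab : a = b := by simpa [fvalAux] using hf'
        subst hab
        have h1 : φ (x.1⁻¹ * y.1) = 1 := by
          rw [map_mul, map_inv, hx, hy, inv_mul_cancel]
        have hz := (hker _).1 h1
        have cz : Commute x.1 (x.1⁻¹ * y.1) := Subgroup.mem_center_iff.1 hz x.1
        have : Commute x.1 (x.1 * (x.1⁻¹ * y.1)) := (Commute.refl x.1).mul_right cz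
        have heq : x.1 * (x.1⁻¹ * y.1) = y.1 := by group
        rw [heq] at this
        exact this.eq
  have hreach_f : ∀ x y : V, (commutingGraph G).Reachable x y → f x = f y := by
    intro x y h
    obtain ⟨p⟩ := h
    induction p with
    | nil => rfl
    | cons h _ ih => exact (hadj_f _ _ h).trans ih
  have hwalk : ∀ (v w : V) (p : (commutingGraph G).Walk v w), p.IsPath → f v = f w :=
    fun v w p _ => hreach_f v w ⟨p⟩
  set F : (commutingGraph G).ConnectedComponent → Option (ZMod m) :=
    SimpleGraph.ConnectedComponent.lift f hwalk with hFdef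
  have hmkf : ∀ (x : V) (c : (commutingGraph G).ConnectedComponent),
      (commutingGraph G).connectedComponentMk x = c ↔ f x = F c := by
    intro x c
    induction c using SimpleGraph.ConnectedComponent.ind with
    | _ w =>
      rw [SimpleGraph.ConnectedComponent.eq]
      show _ ↔ f x = f w
      constructor
      · exact hreach_f x w
      · intro h
        rcases hf_adj x w h with rfl | h
        · exact SimpleGraph.Reachable.refl x
        · exact h.reachable
  have hFinj : Function.Injective F := by
    intro c c' h
    induction c using SimpleGraph.ConnectedComponent.ind with
    | _ v =>
      induction c' using SimpleGraph.ConnectedComponent.ind with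
      | _ w =>
        exact ((hmkf v _).2 (h : f v = f w)).symm ▸ ((hmkf v _).2 h)
  have hFsurj : Function.Surjective F := by
    rintro (_ | b)
    · have hgnc : g ∉ Subgroup.center G := by
        rw [← hker, hg, DihedralGroup.one_def]
        intro hcon
        have : (1 : ZMod m) = 0 := by injection hcon
        exact one_ne_zero this
      exact ⟨(commutingGraph G).connectedComponentMk ⟨g, hgnc⟩, by
        show f _ = none; rw [hfdef]; simp only; rw [hg]; rfl⟩
    · obtain ⟨y, hy⟩ := hsurj (.sr b)
      have hync : y ∉ Subgroup.center G := by
        rw [← hker, hy, DihedralGroup.one_def]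
        intro hcon; cases hcon
      exact ⟨(commutingGraph G).connectedComponentMk ⟨y, hync⟩, by
        show f _ = some b; rw [hfdef]; simp only; rw [hy]; rfl⟩
  have hcard1 : Nat.card (commutingGraph G).ConnectedComponent = m + 1 := by
    rw [Nat.card_eq_of_bijective F ⟨hFinj, hFsurj⟩]
    simp [Nat.card_eq_fintype_card, ZMod.card]
  refine ⟨hcard1, fun x y h => hf_adj x y (hreach_f x y h), ?_⟩
  have hgnc : g ∉ Subgroup.center G := by
    rw [← hker, hg, DihedralGroup.one_def]
    intro hcon
    have : (1 : ZMod m) = 0 := by injection hcon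
    exact one_ne_zero this
  set c₀ := (commutingGraph G).connectedComponentMk ⟨g, hgnc⟩ with hc₀def
  have hFc₀ : F c₀ = none := by
    show f _ = none; rw [hfdef]; simp only; rw [hg]; rfl
  refine ⟨c₀, ?_, ?_⟩
  · -- big component
    have hb : Function.Bijective (fun p : {a : ZMod m // a ≠ 0} × (Subgroup.center G) =>
        (⟨⟨g ^ p.1.1.val * p.2.1, by
          rw [← hker, map_mul, hgpow, (hker _).2 p.2.2, mul_one, DihedralGroup.one_def]
          intro hcon
          exact p.1.2 (by injection hcon)⟩, by
          rw [hmkf, hFc₀, hfdef]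
          show fvalAux (φ _) = none
          rw [map_mul, hgpow, (hker _).2 p.2.2, mul_one]
          rfl⟩ :
          {x : V // (commutingGraph G).connectedComponentMk x = c₀})) := by
      constructor
      · rintro ⟨⟨a, ha⟩, ⟨z, hz⟩⟩ ⟨⟨a', ha'⟩, ⟨z', hz'⟩⟩ hpq
        have h1 : g ^ a.val * z = g ^ a'.val * z' := congrArg (fun t => t.1.1) hpq
        have h2 : DihedralGroup.r a = DihedralGroup.r a' (n := m) := by
          rw [← hgpow a, ← hgpow a']
          calc φ (g ^ a.val) = φ (g ^ a.val * z) := by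
                rw [map_mul, (hker _).2 hz, mul_one]
            _ = φ (g ^ a'.val * z') := by rw [h1]
            _ = φ (g ^ a'.val) := by rw [map_mul, (hker _).2 hz', mul_one]
        have haa : a = a' := by injection h2
        subst haa
        have hzz : z = z' := by
          have := mul_left_cancel h1
          exact this
        subst hzz
        rfl
      · rintro ⟨⟨x, hx⟩, hc⟩
        rw [hmkf, hFc₀, hfdef] at hc
        have hc' : fvalAux (φ x) = none := hc
        cases hxφ : φ x with
        | sr b => rw [hxφ] at hc'; exact absurd hc' (by simp [fvalAux])
        | r a =>
          have ha : a ≠ 0 := by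
            intro h0
            subst h0
            exact hx ((hker x).1 (by rw [hxφ, DihedralGroup.one_def]))
          obtain ⟨z, hz, hzeq⟩ := rot_decomp x a hxφ
          exact ⟨⟨⟨a, ha⟩, ⟨z, hz⟩⟩, by
            apply Subtype.ext; apply Subtype.ext; exact hzeq.symm⟩
    rw [← Nat.card_eq_of_bijective _ hb, Nat.card_prod, hn]
    congr 1
    rw [Nat.card_eq_fintype_card]
    rw [Fintype.card_subtype_compl (p := fun a : ZMod m => a = 0),
      Fintype.card_subtype_eq, ZMod.card]
  · -- small components
    intro c hc
    have hFc : F c ≠ none := fun h => hc (hFinj (h.trans hFc₀.symm))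
    obtain ⟨b, hb⟩ : ∃ b, F c = some b := by
      cases hFcv : F c with
      | none => exact absurd hFcv hFc
      | some b => exact ⟨b, rfl⟩
    obtain ⟨y, hy⟩ := hsurj (.sr b)
    have hync : y ∉ Subgroup.center G := by
      rw [← hker, hy, DihedralGroup.one_def]
      intro hcon; cases hcon
    have hbij : Function.Bijective (fun z : Subgroup.center G =>
        (⟨⟨y * z.1, by
          rw [← hker, map_mul, hy, (hker _).2 z.2, mul_one, DihedralGroup.one_def]
          intro hcon; cases hcon⟩, by
          rw [hmkf, hb, hfdef]
          show fvalAux (φ _) = some b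
          rw [map_mul, hy, (hker _).2 z.2, mul_one]
          rfl⟩ :
          {x : V // (commutingGraph G).connectedComponentMk x = c})) := by
      constructor
      · rintro ⟨z, hz⟩ ⟨z', hz'⟩ hpq
        have h1 : y * z = y * z' := congrArg (fun t => t.1.1) hpq
        exact Subtype.ext (mul_left_cancel h1)
      · rintro ⟨⟨x, hx⟩, hcx⟩
        rw [hmkf, hb, hfdef] at hcx
        have hc' : fvalAux (φ x) = some b := hcx
        cases hxφ : φ x with
        | r a => rw [hxφ] at hc'; exact absurd hc' (by simp [fvalAux])
        | sr b' =>
          rw [hxφ] at hc'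
          have hbb : b' = b := by
            simpa [fvalAux] using hc'
          subst hbb
          have h1 : φ (y⁻¹ * x) = 1 := by
            rw [map_mul, map_inv, hy, hxφ, inv_mul_cancel]
          refine ⟨⟨y⁻¹ * x, (hker _).1 h1⟩, ?_⟩
          apply Subtype.ext; apply Subtype.ext
          show y * (y⁻¹ * x) = x
          group
    rw [← Nat.card_eq_of_bijective _ hbij, hn]
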